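/- Let m ≥ 1 and 0 ≤ r ≤ m − 1, and let N and N' be two (m+1)-dimensional nonunital commutative associative ℂ-algebras such that in each algebra every product of three elements is zero, the subspace of products N² (respectively N'²) is 1-dimensional, and the annihilator {x : x·y = 0 for all y} has dimension r + 1 in both N and N'. Then N and N' are isomorphic as nonunital ℂ-algebras. (The isomorphism type Φ_{m,r} of an algebra with dimension vector (m,1) is determined by the rank m − r of its quadratic form.) -/

import Mathlib

/-- The annihilator `{x ∈ N : x·y = 0 for all y ∈ N}` of a nonunital commutative
`ℂ`-algebra, as a `ℂ`-submodule. -/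
def annihilatorSubmodule (N : Type*) [NonUnitalCommRing N] [Module ℂ N]
    [IsScalarTower ℂ N N] : Submodule ℂ N where
  carrier := {x : N | ∀ y : N, x * y = 0}
  zero_mem' := by intro y; simp
  add_mem' := by
    intro a b ha hb y
    rw [add_mul, ha y, hb y, add_zero]
  smul_mem' := by
    intro c a ha y
    rw [smul_mul_assoc, ha y, smul_zero]

open Module in
/-- Structure lemma: an algebra with the given data admits a basis with a standard
multiplication table. -/
lemma exists_good_basis (m r : ℕ) (hr : r + 1 ≤ m)
    (N : Type*) [NonUnitalCommRing N] [Module ℂ N]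
    [SMulCommClass ℂ N N] [IsScalarTower ℂ N N] [Module.Finite ℂ N]
    (hdim : Module.finrank ℂ N = m + 1)
    (htriple : ∀ x y z : N, x * y * z = 0)
    (hsq : Module.finrank ℂ
      ↥(Submodule.span ℂ {z : N | ∃ x y : N, z = x * y}) = 1)
    (hann : Module.finrank ℂ ↥(annihilatorSubmodule N) = r + 1) :
    ∃ b : Basis (Fin (m - r) ⊕ (Unit ⊕ Fin r)) ℂ N,
      (∀ i j : Fin (m - r), b (Sum.inl i) * b (Sum.inl j)
          = if i = j then b (Sum.inr (Sum.inl ())) else 0) ∧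
      (∀ u x, b (Sum.inr u) * x = 0) := by
  classical
  set S := Submodule.span ℂ {z : N | ∃ x y : N, z = x * y} with hS
  let bS : Basis (Fin 1) ℂ ↥S := finBasisOfFinrankEq ℂ ↥S hsq
  set w : N := (bS 0 : N) with hw
  have hw0 : w ≠ 0 := by
    simpa [hw] using bS.ne_zero 0
  have hmem : ∀ x y : N, x * y ∈ S := fun x y => Submodule.subset_span ⟨x, y, rfl⟩
  -- the bilinear form
  let B : N →ₗ[ℂ] N →ₗ[ℂ] ℂ := LinearMap.mk₂ ℂ
    (fun x y => bS.coord 0 ⟨x * y, hmem x y⟩)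
    (fun x₁ x₂ y => by
      have : (⟨(x₁ + x₂) * y, hmem _ y⟩ : S)
          = ⟨x₁ * y, hmem _ y⟩ + ⟨x₂ * y, hmem _ y⟩ := by
        ext; simp [add_mul]
      rw [this, map_add])
    (fun c x y => by
      have : (⟨(c • x) * y, hmem _ y⟩ : S) = c • ⟨x * y, hmem x y⟩ := by
        ext; simp [smul_mul_assoc]
      rw [this, map_smul])
    (fun x y₁ y₂ => by
      have : (⟨x * (y₁ + y₂), hmem x _⟩ : S)
          = ⟨x * y₁, hmem x _⟩ + ⟨x * y₂, hmem x _⟩ := by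
        ext; simp [mul_add]
      rw [this, map_add])
    (fun c x y => by
      have : (⟨x * (c • y), hmem x _⟩ : S) = c • ⟨x * y, hmem x y⟩ := by
        ext; simp [mul_smul_comm]
      rw [this, map_smul])
  have hBapp : ∀ x y : N, B x y = bS.coord 0 ⟨x * y, hmem x y⟩ := fun _ _ => rfl
  have key : ∀ x y : N, x * y = B x y • w := by
    intro x y
    have h := bS.sum_repr ⟨x * y, hmem x y⟩
    rw [Fin.sum_univ_one] at h
    have := congrArg (Subtype.val) h
    simpa [hBapp, Basis.coord_apply, hw] using this.symm
  have hsymm : ∀ x y : N, B x y = B y x := by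
    intro x y; rw [hBapp, hBapp]; congr 1; ext; simp [mul_comm]
  set Ann := annihilatorSubmodule N with hAnn
  have hSA : S ≤ Ann := by
    rw [hS]
    refine Submodule.span_le.mpr ?_
    rintro z ⟨x, y, rfl⟩ y'
    exact htriple x y y'
  have hwAnn : w ∈ Ann := hSA (bS 0).2
  have hannB : ∀ x : N, x ∈ Ann ↔ ∀ y, B x y = 0 := by
    intro x
    constructor
    · intro hx y
      have := key x y
      rw [hx y] at this
      rcases smul_eq_zero.mp this.symm with h | h
      · exact h
      · exact absurd h hw0
    · intro h y
      rw [key x y, h y, zero_smul]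
  obtain ⟨V, hV⟩ := Submodule.exists_isCompl Ann
  have hfrk : Module.finrank ℂ ↥Ann + Module.finrank ℂ ↥V = m + 1 := by
    rw [← hdim]; exact Submodule.finrank_add_eq_of_isCompl hV
  have hkV : Module.finrank ℂ ↥V = m - r := by omega
  -- restricted bilinear form
  set BV : ↥V →ₗ[ℂ] ↥V →ₗ[ℂ] ℂ := B.compl₁₂ V.subtype V.subtype with hBV
  have hBVapp : ∀ x y : ↥V, BV x y = B x y := fun _ _ => rfl
  have hBVsymm : BV.IsSymm := by
    constructor
    intro x y
    simp only [RingHom.id_apply]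
    exact hsymm x.1 y.1
  set Q : QuadraticForm ℂ ↥V := LinearMap.BilinMap.toQuadraticMap BV with hQdef
  have hQassoc : QuadraticMap.associated (R := ℂ) Q = BV :=
    QuadraticMap.associated_left_inverse (S := ℂ) hBVsymm.eq
  have hsep : (QuadraticMap.associated (R := ℂ) Q).SeparatingLeft := by
    rw [hQassoc]
    intro v hv
    have hvAnn : (v : N) ∈ Ann := by
      rw [hannB]
      intro y
      have hy : y ∈ Ann ⊔ V := by rw [hV.sup_eq_top]; trivial
      obtain ⟨a, ha, v', hv', rfl⟩ := Submodule.mem_sup.mp hy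
      rw [map_add]
      have h1 : B (v : N) a = 0 := by
        rw [hsymm]; exact (hannB a).mp ha _
      have h2 : B (v : N) v' = 0 := by
        have := hv ⟨v', hv'⟩
        rwa [hBVapp] at this
      rw [h1, h2, add_zero]
    have : v = 0 := by
      have := hV.disjoint
      rw [Submodule.disjoint_def] at this
      exact Subtype.ext (this _ hvAnn v.2)
    exact this
  obtain ⟨φ⟩ := Q.equivalent_sum_squares hsep
  set ι := Fin (Module.finrank ℂ ↥V)
  -- basis of V diagonalizing the form
  set bV : Basis ι ℂ ↥V := (Pi.basisFun ℂ ι).map φ.toLinearEquiv.symm with hbV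
  have hbVapp : ∀ i, bV i = φ.symm (Pi.single i 1) := by
    intro i
    simp [hbV, Pi.basisFun_apply]
  have hQφ : ∀ z : ι → ℂ, Q (φ.symm z) = ∑ i, z i * z i := by
    intro z
    have := φ.symm.map_app z
    rw [this]; simp [QuadraticMap.weightedSumSquares_apply]
    rfl
  have hBvb : ∀ i j, BV (bV i) (bV j) = if i = j then 1 else 0 := by
    intro i j
    have hpolar : 2 * BV (bV i) (bV j)
        = Q (bV i + bV j) - Q (bV i) - Q (bV j) := by
      have hsy : BV (bV j) (bV i) = BV (bV i) (bV j) := by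
        rw [hBVapp, hBVapp]; exact hsymm _ _
      simp only [hQdef, LinearMap.BilinMap.toQuadraticMap_apply, map_add,
        LinearMap.add_apply]
      rw [hsy]
      ring
    have h1 : Q (bV i + bV j) = ∑ t, ((Pi.single i 1 : ι → ℂ) t + (Pi.single j 1 : ι → ℂ) t)
        * ((Pi.single i 1 : ι → ℂ) t + (Pi.single j 1 : ι → ℂ) t) := by
      rw [hbVapp, hbVapp, ← map_add]
      exact hQφ _
    have h2 : Q (bV i) = ∑ t, (Pi.single i 1 : ι → ℂ) t * (Pi.single i 1 : ι → ℂ) t := by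
      rw [hbVapp]; exact hQφ _
    have h3 : Q (bV j) = ∑ t, (Pi.single j 1 : ι → ℂ) t * (Pi.single j 1 : ι → ℂ) t := by
      rw [hbVapp]; exact hQφ _
    have hs : ∀ a : ι, ∑ t : ι, (Pi.single a 1 : ι → ℂ) t * (Pi.single a 1 : ι → ℂ) t = 1 := by
      intro a
      rw [Finset.sum_eq_single a]
      · simp
      · intro t _ ht
        rw [Pi.single_eq_of_ne ht, zero_mul]
      · intro h; exact absurd (Finset.mem_univ a) h
    by_cases hij : i = j
    · subst hij
      have h4 : ∑ t : ι, ((Pi.single i 1 : ι → ℂ) t + (Pi.single i 1 : ι → ℂ) t)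
          * ((Pi.single i 1 : ι → ℂ) t + (Pi.single i 1 : ι → ℂ) t)
          = 4 * ∑ t : ι, (Pi.single i 1 : ι → ℂ) t * (Pi.single i 1 : ι → ℂ) t := by
        rw [Finset.mul_sum]
        exact Finset.sum_congr rfl fun t _ => by ring
      have h2e : (2 : ℂ) * BV (bV i) (bV i) = 2 := by
        rw [hpolar, h1, h2, h4, hs i]
        ring
      have hx : BV (bV i) (bV i) = 1 :=
        mul_left_cancel₀ two_ne_zero (by rw [h2e, mul_one])
      simp [hx]
    · have hcross : ∑ t : ι, (Pi.single i 1 : ι → ℂ) t * (Pi.single j 1 : ι → ℂ) t = 0 := by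
        apply Finset.sum_eq_zero
        intro t _
        rcases eq_or_ne t i with rfl | ht
        · rw [Pi.single_eq_of_ne hij, mul_zero]
        · rw [Pi.single_eq_of_ne ht, zero_mul]
      have hcomm : ∑ t : ι, (Pi.single j 1 : ι → ℂ) t * (Pi.single i 1 : ι → ℂ) t = 0 := by
        rw [← hcross]
        exact Finset.sum_congr rfl fun t _ => mul_comm _ _
      have h2e : (2 : ℂ) * BV (bV i) (bV j) = 0 := by
        rw [hpolar, h1, h2, h3]
        simp only [add_mul, mul_add, Finset.sum_add_distrib]
        rw [hs i, hs j, hcross, hcomm]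
        ring
      rcases mul_eq_zero.mp h2e with h | h
      · exact absurd h two_ne_zero
      · simp [h, hij]
  -- basis of the annihilator
  have hwAnn' : (⟨w, hwAnn⟩ : ↥Ann) ≠ 0 := by
    intro h
    exact hw0 (by simpa using congrArg Subtype.val h)
  have li : LinearIndependent ℂ (fun _ : Unit => (⟨w, hwAnn⟩ : ↥Ann)) :=
    linearIndependent_unique_iff.mpr hwAnn'
  set W : Submodule ℂ ↥Ann :=
    Submodule.span ℂ (Set.range fun _ : Unit => (⟨w, hwAnn⟩ : ↥Ann)) with hW
  let bW : Basis Unit ℂ ↥W := Basis.span li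
  have hbWapp : ((bW () : ↥W) : ↥Ann) = ⟨w, hwAnn⟩ := congrArg Subtype.val (Module.Basis.span_apply li ())
  obtain ⟨A, hA⟩ := Submodule.exists_isCompl W
  have hWrk : Module.finrank ℂ ↥W = 1 := by
    rw [finrank_eq_card_basis bW]; simp
  have hArk : Module.finrank ℂ ↥A = r := by
    have := Submodule.finrank_add_eq_of_isCompl hA
    rw [hWrk, hann] at this
    omega
  let bA : Basis (Fin r) ℂ ↥A := finBasisOfFinrankEq ℂ ↥A hArk
  let bAnn : Basis (Unit ⊕ Fin r) ℂ ↥Ann :=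
    (bW.prod bA).map (Submodule.prodEquivOfIsCompl W A hA)
  have hbAnnW : ((bAnn (Sum.inl ()) : ↥Ann) : N) = w := by
    have : bAnn (Sum.inl ()) = ((bW.prod bA (Sum.inl ())).1 : ↥Ann)
        + ((bW.prod bA (Sum.inl ())).2 : ↥Ann) := by
      rw [show bAnn (Sum.inl ()) = Submodule.prodEquivOfIsCompl W A hA
        ((bW.prod bA) (Sum.inl ())) from Basis.map_apply _ _ _]
      exact Submodule.coe_prodEquivOfIsCompl' _ _ hA _
    rw [this, Basis.prod_apply_inl_fst, Basis.prod_apply_inl_snd]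
    rw [hbWapp]
    simp
  -- the basis of N
  let bN0 : Basis (ι ⊕ (Unit ⊕ Fin r)) ℂ N :=
    (bV.prod bAnn).map (Submodule.prodEquivOfIsCompl V Ann hV.symm)
  have hbN0inl : ∀ i : ι, bN0 (Sum.inl i) = ((bV i : ↥V) : N) := by
    intro i
    have : bN0 (Sum.inl i) = ((bV.prod bAnn (Sum.inl i)).1 : N)
        + ((bV.prod bAnn (Sum.inl i)).2 : N) := by
      rw [show bN0 (Sum.inl i) = Submodule.prodEquivOfIsCompl V Ann hV.symm
        ((bV.prod bAnn) (Sum.inl i)) from Basis.map_apply _ _ _]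
      exact Submodule.coe_prodEquivOfIsCompl' _ _ hV.symm _
    rw [this, Basis.prod_apply_inl_fst, Basis.prod_apply_inl_snd]
    simp
  have hbN0inr : ∀ u, bN0 (Sum.inr u) = ((bAnn u : ↥Ann) : N) := by
    intro u
    have : bN0 (Sum.inr u) = ((bV.prod bAnn (Sum.inr u)).1 : N)
        + ((bV.prod bAnn (Sum.inr u)).2 : N) := by
      rw [show bN0 (Sum.inr u) = Submodule.prodEquivOfIsCompl V Ann hV.symm
        ((bV.prod bAnn) (Sum.inr u)) from Basis.map_apply _ _ _]
      exact Submodule.coe_prodEquivOfIsCompl' _ _ hV.symm _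
    rw [this, Basis.prod_apply_inr_fst, Basis.prod_apply_inr_snd]
    simp
  let bN : Basis (Fin (m - r) ⊕ (Unit ⊕ Fin r)) ℂ N :=
    bN0.reindex (Equiv.sumCongr (finCongr hkV) (Equiv.refl _))
  have hbNinl : ∀ i : Fin (m - r),
      bN (Sum.inl i) = ((bV (finCongr hkV.symm i) : ↥V) : N) := by
    intro i
    rw [Basis.reindex_apply]
    simp only [Equiv.sumCongr_symm, Equiv.sumCongr_apply, Equiv.refl_symm,
      Sum.map_inl]
    exact hbN0inl _
  have hbNinr : ∀ u, bN (Sum.inr u) = ((bAnn u : ↥Ann) : N) := by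
    intro u
    rw [Basis.reindex_apply]
    simp only [Equiv.sumCongr_symm, Equiv.sumCongr_apply, Equiv.refl_symm,
      Sum.map_inr, Equiv.refl_apply]
    exact hbN0inr _
  refine ⟨bN, ?_, ?_⟩
  · intro i j
    rw [hbNinl, hbNinl]
    rw [key]
    have : B ((bV (finCongr hkV.symm i) : ↥V) : N)
        ((bV (finCongr hkV.symm j) : ↥V) : N)
        = BV (bV (finCongr hkV.symm i)) (bV (finCongr hkV.symm j)) := rfl
    rw [this, hBvb]
    have hij : (finCongr hkV.symm i = finCongr hkV.symm j) ↔ i = j := by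
      constructor
      · intro h; exact finCongr hkV.symm |>.injective h |>.symm ▸ rfl
      · intro h; rw [h]
    by_cases h : i = j
    · subst h
      simp [hbNinr, hbAnnW]
    · rw [if_neg (fun hh => h (hij.mp hh)), if_neg h, zero_smul]
  · intro u x
    rw [hbNinr]
    exact (bAnn u).2 x

/-- The isomorphism type `Φ_{m,r}` of an algebra with dimension vector `(m,1)` is
determined by the rank `m − r` of its quadratic form: two `(m+1)`-dimensional nonunital
commutative associative `ℂ`-algebras with vanishing triple products, 1-dimensional
squares, and annihilators of dimension `r + 1` are isomorphic. -/
theorem iso_of_Phi_data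
    (m r : ℕ) (hm : 1 ≤ m) (hr : r + 1 ≤ m)
    (N : Type*) [NonUnitalCommRing N] [Module ℂ N]
    [SMulCommClass ℂ N N] [IsScalarTower ℂ N N] [Module.Finite ℂ N]
    (N' : Type*) [NonUnitalCommRing N'] [Module ℂ N']
    [SMulCommClass ℂ N' N'] [IsScalarTower ℂ N' N'] [Module.Finite ℂ N']
    (hdim : Module.finrank ℂ N = m + 1)
    (hdim' : Module.finrank ℂ N' = m + 1)
    (htriple : ∀ x y z : N, x * y * z = 0)
    (htriple' : ∀ x y z : N', x * y * z = 0)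
    (hsq : Module.finrank ℂ
      ↥(Submodule.span ℂ {z : N | ∃ x y : N, z = x * y}) = 1)
    (hsq' : Module.finrank ℂ
      ↥(Submodule.span ℂ {z : N' | ∃ x y : N', z = x * y}) = 1)
    (hann : Module.finrank ℂ ↥(annihilatorSubmodule N) = r + 1)
    (hann' : Module.finrank ℂ ↥(annihilatorSubmodule N') = r + 1) :
    ∃ e : N ≃ₗ[ℂ] N', ∀ x y : N, e (x * y) = e x * e y := by
  obtain ⟨b, hb1, hb2⟩ := exists_good_basis m r hr N hdim htriple hsq hann
  obtain ⟨b', hb1', hb2'⟩ := exists_good_basis m r hr N' hdim' htriple' hsq' hann'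
  refine ⟨b.equiv b' (Equiv.refl _), ?_⟩
  have main : (LinearMap.mul ℂ N).compr₂ (b.equiv b' (Equiv.refl _) : N →ₗ[ℂ] N')
      = (LinearMap.mul ℂ N').compl₁₂
        (b.equiv b' (Equiv.refl _) : N →ₗ[ℂ] N')
        (b.equiv b' (Equiv.refl _) : N →ₗ[ℂ] N') := by
    apply b.ext
    intro i
    apply b.ext
    intro j
    simp only [LinearMap.compr₂_apply, LinearMap.compl₁₂_apply, LinearMap.mul_apply',
      LinearEquiv.coe_coe]
    rcases i with i | u
    · rcases j with j | u'
      · rw [hb1 i j]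
        rw [Module.Basis.equiv_apply, Module.Basis.equiv_apply, Equiv.refl_apply, Equiv.refl_apply,
          hb1' i j]
        by_cases h : i = j
        · subst h
          simp [Module.Basis.equiv_apply]
        · simp [h]
      · rw [mul_comm, hb2 u' _, map_zero]
        rw [Module.Basis.equiv_apply, Module.Basis.equiv_apply, Equiv.refl_apply, Equiv.refl_apply,
          mul_comm, hb2' u' _]
    · rw [hb2 u _, map_zero]
      rw [Module.Basis.equiv_apply, Equiv.refl_apply, hb2' u _]
  intro x y
  have := DFunLike.congr_fun (DFunLike.congr_fun main x) y
  simpa using this
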